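/- Let q ∈ ℂ be nonzero and not a root of unity, and let U⁻, J, f_ij, Ā_k and ǧ_ij be as in the context. Then in (U⁻/J)[y₂, y₃] the image of ǧ₁₄ = f₁₄Ā₂Ā₃ + f₁₂f₂₄Ā₃ + f₁₃f₃₄Ā₂ + f₁₂f₂₃f₃₄ equals [3]_q · y₃ · aba. -/

import Mathlib

noncomputable section

namespace G2Shapovalov

/-- The free associative unital `ℂ`-algebra on two generators `a = f_α`, `b = f_β`. -/
abbrev F : Type := FreeAlgebra ℂ (Fin 2)

/-- The free generator `a = f_α`. -/
def A : F := FreeAlgebra.ι ℂ 0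

/-- The free generator `b = f_β`. -/
def B : F := FreeAlgebra.ι ℂ 1

/-- The two q-Serre relations of `U_q(g₂)⁻`. -/
inductive SerreRel (q : ℂ) : F → F → Prop
  | serre₁ : SerreRel q
      (A ^ 4 * B - (q ^ 3 + q + q⁻¹ + q⁻¹ ^ 3) • (A ^ 3 * B * A)
        + ((q ^ 2 + 1 + q⁻¹ ^ 2) * (q ^ 2 + q⁻¹ ^ 2)) • (A ^ 2 * B * A ^ 2)
        - (q ^ 3 + q + q⁻¹ + q⁻¹ ^ 3) • (A * B * A ^ 3) + B * A ^ 4) 0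
  | serre₂ : SerreRel q (B ^ 2 * A - (q ^ 3 + q⁻¹ ^ 3) • (B * A * B) + A * B ^ 2) 0

/-- `U⁻`, the quotient of the free algebra by the two-sided ideal generated by
the q-Serre elements. -/
abbrev Um (q : ℂ) : Type := RingQuot (SerreRel q)

/-- The image of `a` in `U⁻`. -/
def a (q : ℂ) : Um q := RingQuot.mkAlgHom ℂ (SerreRel q) A

/-- The image of `b` in `U⁻`. -/
def b (q : ℂ) : Um q := RingQuot.mkAlgHom ℂ (SerreRel q) B

/-- The deformed commutator `[x,y]_p = xy − p·yx`. -/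
def br {R : Type} [Ring R] [Algebra ℂ R] (p : ℂ) (x y : R) : R := x * y - p • (y * x)

variable (q : ℂ)

/- The matrix entries of the reduced inverse Shapovalov form. -/
def f12 : Um q := a q
def f34 : Um q := a q
def f45 : Um q := a q
def f67 : Um q := a q
def f23 : Um q := (q ^ 2 + 1 + q⁻¹ ^ 2) • b q
def f56 : Um q := (q ^ 2 + 1 + q⁻¹ ^ 2) • b q
def f13 : Um q := br (q ^ 3) (b q) (a q)
def f24 : Um q := br (q ^ 3) (a q) (b q)
def f35 : Um q := (q⁻¹ ^ 2 * (q + q⁻¹)⁻¹) • br (q ^ 2) (a q) (a q)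
def f46 : Um q := br (q ^ 3) (b q) (a q)
def f57 : Um q := br (q ^ 3) (a q) (b q)
def f14 : Um q := (q⁻¹ * (q + q⁻¹)⁻¹) • br (q ^ 3) (a q) (br (q ^ 3) (b q) (a q))
def f25 : Um q := ((q + q⁻¹) ^ 2)⁻¹ • br (q ^ 3) (a q) (br q (a q) (b q))
def f36 : Um q := ((q + q⁻¹) ^ 2)⁻¹ • br (q ^ 3) (br q (b q) (a q)) (a q)
def f47 : Um q := (q⁻¹ * (q + q⁻¹)⁻¹) • br (q ^ 3) (br (q ^ 3) (a q) (b q)) (a q)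
def f15 : Um q := (q⁻¹ ^ 2 * ((q + q⁻¹) ^ 2)⁻¹) •
  br q (a q) (br (q ^ 3) (a q) (br (q ^ 3) (b q) (a q)))
def f26 : Um q := (q⁻¹ ^ 3 * ((q + q⁻¹) ^ 2)⁻¹) •
  br (q ^ 6) (b q) (br (q ^ 3) (a q) (br q (a q) (b q)))
def f37 : Um q := (q⁻¹ ^ 2 * ((q + q⁻¹) ^ 2)⁻¹) •
  br q (br (q ^ 3) (br (q ^ 3) (a q) (b q)) (a q)) (a q)
def f16 : Um q := (q⁻¹ ^ 2 * ((q + q⁻¹) ^ 2)⁻¹) •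
  br (q ^ 3) (b q) (br q (a q) (br (q ^ 3) (a q) (br (q ^ 3) (b q) (a q))))
def f27 : Um q := (q⁻¹ ^ 2 * ((q + q⁻¹) ^ 2)⁻¹) •
  br (q ^ 3) (br q (br (q ^ 3) (br (q ^ 3) (a q) (b q)) (a q)) (a q)) (b q)
def f17 : Um q := (q⁻¹ ^ 2 * ((q + q⁻¹) ^ 2)⁻¹) •
  br q (a q) (br (q ^ 3) (b q) (br q (a q) (br (q ^ 3) (a q) (br (q ^ 3) (b q) (a q)))))

/-- The relation generating the two-sided ideal `J`: `ab = q⁻³·ba`. -/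
inductive JRel (q : ℂ) : Um q → Um q → Prop
  | rel : JRel q (a q * b q) (q⁻¹ ^ 3 • (b q * a q))

/-- The quotient algebra `U⁻/J`. -/
abbrev UmJ (q : ℂ) : Type := RingQuot (JRel q)

/-- The quotient map `π : U⁻ → U⁻/J`. -/
def π : Um q →ₐ[ℂ] UmJ q := RingQuot.mkAlgHom ℂ (JRel q)

end G2Shapovalov

namespace G2Shapovalov

open Polynomial

/-- The two-variable polynomial ring `(y₂ = C X`, `y₃ = X)`. -/
abbrev P2 (R : Type) [Ring R] : Type := Polynomial (Polynomial R)

/-- `Ā₂ = (1 − y₂)/(q − q⁻¹)` in `U⁻[y₂, y₃]`. -/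
def Abar₂ (q : ℂ) : P2 (Um q) := (q - q⁻¹)⁻¹ • (1 - C X)

/-- `Ā₃ = (1 − y₃)/(q − q⁻¹)` in `U⁻[y₂, y₃]`. -/
def Abar₃ (q : ℂ) : P2 (Um q) := (q - q⁻¹)⁻¹ • ((1 : P2 (Um q)) - X)

/-- `ǧ₁₄ = f₁₄Ā₂Ā₃ + f₁₂f₂₄Ā₃ + f₁₃f₃₄Ā₂ + f₁₂f₂₃f₃₄` in `U⁻[y₂, y₃]`. -/
def g14 (q : ℂ) : P2 (Um q) :=
  C (C (f14 q)) * Abar₂ q * Abar₃ q + C (C (f12 q * f24 q)) * Abar₃ q +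
    C (C (f13 q * f34 q)) * Abar₂ q + C (C (f12 q * f23 q * f34 q))

/-- The coefficientwise quotient map `U⁻[y₂,y₃] → (U⁻/J)[y₂,y₃]`. -/
def Φ₂ (q : ℂ) : P2 (Um q) →+* P2 (UmJ q) :=
  Polynomial.mapRingHom (Polynomial.mapRingHom (π q).toRingHom)

lemma hrel' (q : ℂ) : π q (a q) * π q (b q) = q⁻¹ ^ 3 • (π q (b q) * π q (a q)) := by
  have h := RingQuot.mkAlgHom_rel ℂ (JRel.rel (q := q))
  simpa [π, map_mul, map_smul] using h

lemma Φ₂_smul' (q : ℂ) (z : ℂ) (p : P2 (Um q)) : Φ₂ q (z • p) = z • Φ₂ q p := by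
  rw [Algebra.smul_def, (Φ₂ q).map_mul, Algebra.smul_def]
  congr 1
  simp [Φ₂, Polynomial.algebraMap_apply]

lemma Φ₂_CC' (q : ℂ) (u : Um q) : Φ₂ q (C (C u)) = C (C (π q u)) := by
  simp [Φ₂]

lemma π_br' (q p : ℂ) (x y : Um q) : π q (br p x y) = br p (π q x) (π q y) := by
  simp [br, map_sub, map_smul, map_mul]

set_option maxHeartbeats 1000000 in
theorem g14_mod_J (q : ℂ) (hq : q ≠ 0) (hroot : ∀ n : ℕ, 0 < n → q ^ n ≠ 1) :
    Φ₂ q (g14 q) = (q ^ 2 + 1 + q⁻¹ ^ 2) •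
      ((X : P2 (UmJ q)) * C (C (π q (a q) * π q (b q) * π q (a q)))) := by
  have hq3 : q ^ 3 * q⁻¹ ^ 3 = 1 := by field_simp
  have hne : q - q⁻¹ ≠ 0 := by
    have h2 := hroot 2 (by norm_num)
    intro h
    apply h2
    have hq' : q = q⁻¹ := by linear_combination h
    calc q ^ 2 = q * q := sq q
    _ = q * q⁻¹ := by rw [← hq']
    _ = 1 := mul_inv_cancel₀ hq
  -- local copies of generic lemmas (instance unification workaround for RingQuot)
  have hmulsub : ∀ u v w : UmJ q, u * (v - w) = u * v - u * w := fun u v w => mul_sub u v w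
  have hsubsmul : ∀ (c d : ℂ) (u : UmJ q), (c - d) • u = c • u - d • u :=
    fun c d u => sub_smul c d u
  have hbr0 : ∀ (p : ℂ) (x : UmJ q), br p x 0 = 0 := by
    intro p x
    rw [br, show x * 0 = 0 from mul_zero x, show (0 : UmJ q) * x = 0 from zero_mul x,
      show p • (0 : UmJ q) = 0 from smul_zero p]
    module
  set A' := π q (a q) with hA
  set B' := π q (b q) with hB
  have hab : A' * B' = q⁻¹ ^ 3 • (B' * A') := hrel' q
  set M : UmJ q := B' * A' * A' with hM
  have hbr : π q (br (q ^ 3) (b q) (a q)) = 0 := by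
    rw [π_br', ← hA, ← hB, br, hab, smul_smul, hq3, one_smul]
    module
  have h14 : π q (f14 q) = 0 := by
    rw [f14, map_smul, π_br', hbr, ← hA, hbr0, smul_zero]
  have h13 : π q (f13 q * f34 q) = 0 := by
    rw [map_mul, f13, hbr, zero_mul]
  have h24 : π q (f12 q * f24 q) = (q⁻¹ ^ 3 * q⁻¹ ^ 3 - 1) • M := by
    have e1 : π q (f12 q * f24 q) = A' * (A' * B' - q ^ 3 • (B' * A')) := by
      rw [map_mul, f12, f24, π_br', ← hA, ← hB, br]
    rw [e1, hmulsub, hab, mul_smul_comm, mul_smul_comm, ← mul_assoc A' B' A', hab,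
      smul_mul_assoc, smul_smul, smul_smul, hq3, one_smul, hsubsmul, one_smul]
  have h234 : π q (f12 q * f23 q * f34 q) = ((q ^ 2 + 1 + q⁻¹ ^ 2) * q⁻¹ ^ 3) • M := by
    rw [map_mul, map_mul, f12, f23, f34, map_smul, mul_smul_comm, smul_mul_assoc,
      ← hA, ← hB, hab, smul_mul_assoc, smul_smul, ← hM]
  have hΦ3 : Φ₂ q (Abar₃ q) = (q - q⁻¹)⁻¹ • (1 - X) := by
    rw [Abar₃, Φ₂_smul', (Φ₂ q).map_sub, (Φ₂ q).map_one]
    congr 1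
    simp [Φ₂]
  have hΦ2 : Φ₂ q (Abar₂ q) = (q - q⁻¹)⁻¹ • (1 - C X) := by
    rw [Abar₂, Φ₂_smul', (Φ₂ q).map_sub, (Φ₂ q).map_one]
    congr 1
    simp [Φ₂]
  rw [g14, (Φ₂ q).map_add, (Φ₂ q).map_add, (Φ₂ q).map_add, (Φ₂ q).map_mul, (Φ₂ q).map_mul,
    (Φ₂ q).map_mul, (Φ₂ q).map_mul, Φ₂_CC', Φ₂_CC', Φ₂_CC', Φ₂_CC', h14, h13, h24, h234,
    hΦ2, hΦ3, hab, smul_mul_assoc, ← hM]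
  rw [show (C (C ((q⁻¹ ^ 3 * q⁻¹ ^ 3 - 1) • M)) : P2 (UmJ q))
      = (q⁻¹ ^ 3 * q⁻¹ ^ 3 - 1) • C (C M) by rw [smul_C, smul_C]]
  rw [show (C (C (((q ^ 2 + 1 + q⁻¹ ^ 2) * q⁻¹ ^ 3) • M)) : P2 (UmJ q))
      = ((q ^ 2 + 1 + q⁻¹ ^ 2) * q⁻¹ ^ 3) • C (C M) by rw [smul_C, smul_C]]
  rw [show (C (C (q⁻¹ ^ 3 • M)) : P2 (UmJ q)) = q⁻¹ ^ 3 • C (C M) by rw [smul_C, smul_C]]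
  simp only [map_zero, zero_mul, add_zero, zero_add]
  rw [smul_mul_assoc, mul_smul_comm, mul_sub, mul_one, mul_smul_comm, X_mul]
  have hne6 : (-q ^ 6 + q ^ 8 : ℂ) ≠ 0 := by
    have h21 : q ^ 2 - 1 ≠ 0 := sub_ne_zero.mpr (hroot 2 (by norm_num))
    rw [show (-q ^ 6 + q ^ 8 : ℂ) = q ^ 6 * (q ^ 2 - 1) by ring]
    exact mul_ne_zero (pow_ne_zero 6 hq) h21
  have hc : (-q ^ 6 + q ^ 8) * (-q ^ 6 + q ^ 8)⁻¹ = 1 := mul_inv_cancel₀ hne6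
  have hd : (-1 + q ^ 2 : ℂ) * (-1 + q ^ 2)⁻¹ = 1 :=
    mul_inv_cancel₀ (by rw [neg_add_eq_sub]; exact sub_ne_zero.mpr (hroot 2 (by norm_num)))
  match_scalars <;> field_simp [hq, hne, hne6]
  · linear_combination (-(1 + q ^ 2 + q ^ 4) : ℂ) * hd
  · linear_combination ((1 + q ^ 2 + q ^ 4) : ℂ) * hd


end G2Shapovalov
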